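/- Let A be a finite set and (z_a)_{a∈A} a family of elements in a commutative ring. Write z_S = ∑_{a∈S} z_a for S ⊆ A. Then for every natural number n with n ≥ |A|, one has z_A^{n+1} = ∑_{∅≠J⊆A} |J|! · z_J · (∏_{ν∈J} z_ν) · z_A^{n-|J|}, where the sum is over all nonempty subsets J of A. -/

import Mathlib

open Finset

private def Iaux {ι R : Type*} [DecidableEq ι] [CommRing R] (A : Finset ι) (z : ι → R) (m : ℕ) : R :=
  ∑ J ∈ A.powerset.filter (fun J => J.card = m), ((m.factorial : ℕ) : R) * ∏ a ∈ J, z a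

private lemma Iaux_key {ι R : Type*} [DecidableEq ι] [CommRing R] (A : Finset ι) (z : ι → R) (m : ℕ) :
    Iaux A z m * (∑ a ∈ A, z a) =
      Iaux A z (m + 1) + ∑ J ∈ A.powerset.filter (fun J => J.card = m),
        ((m.factorial : ℕ) : R) * (∑ a ∈ J, z a) * ∏ a ∈ J, z a := by
  classical
  have hsplit : ∀ J ∈ A.powerset.filter (fun J => J.card = m),
      (((m.factorial : ℕ) : R) * ∏ a ∈ J, z a) * (∑ a ∈ A, z a) =
      ((m.factorial : ℕ) : R) * (∑ a ∈ J, z a) * ∏ a ∈ J, z a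
        + ∑ b ∈ A \ J, ((m.factorial : ℕ) : R) * ∏ a ∈ insert b J, z a := by
    intro J hJ
    simp only [mem_filter, mem_powerset] at hJ
    have hA : (∑ a ∈ A, z a) = (∑ a ∈ J, z a) + ∑ a ∈ A \ J, z a := by
      rw [← Finset.sum_sdiff hJ.1]; ring
    rw [hA, mul_add]
    congr 1
    · ring
    · rw [Finset.mul_sum]
      refine Finset.sum_congr rfl fun b hb => ?_
      have hbJ : b ∉ J := (Finset.mem_sdiff.mp hb).2
      rw [Finset.prod_insert hbJ]; ring
  unfold Iaux
  rw [Finset.sum_mul, Finset.sum_congr rfl hsplit, Finset.sum_add_distrib, add_comm]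
  congr 1
  rw [Finset.sum_sigma']
  have h2 : ∑ K ∈ A.powerset.filter (fun J => J.card = m + 1),
      (((m + 1).factorial : ℕ) : R) * ∏ a ∈ K, z a
      = ∑ K ∈ A.powerset.filter (fun J => J.card = m + 1),
      ∑ b ∈ K, ((m.factorial : ℕ) : R) * ∏ a ∈ K, z a := by
    refine Finset.sum_congr rfl fun K hK => ?_
    simp only [mem_filter, mem_powerset] at hK
    rw [Finset.sum_const, hK.2, Nat.factorial_succ]
    push_cast
    rw [nsmul_eq_mul]
    push_cast
    ring
  rw [h2, Finset.sum_sigma']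
  refine Finset.sum_nbij' (fun x => ⟨insert x.2 x.1, x.2⟩) (fun x => ⟨x.1.erase x.2, x.2⟩) ?_ ?_ ?_ ?_ ?_
  · rintro ⟨J, b⟩ h
    simp only [Finset.mem_sigma, mem_filter, mem_powerset, Finset.mem_sdiff] at h ⊢
    obtain ⟨⟨hJA, hJc⟩, hbA, hbJ⟩ := h
    refine ⟨⟨Finset.insert_subset hbA hJA, ?_⟩, Finset.mem_insert_self _ _⟩
    rw [Finset.card_insert_of_notMem hbJ, hJc]
  · rintro ⟨K, b⟩ h
    simp only [Finset.mem_sigma, mem_filter, mem_powerset, Finset.mem_sdiff] at h ⊢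
    obtain ⟨⟨hKA, hKc⟩, hbK⟩ := h
    refine ⟨⟨Finset.Subset.trans (Finset.erase_subset _ _) hKA, ?_⟩, hKA hbK, Finset.notMem_erase _ _⟩
    rw [Finset.card_erase_of_mem hbK, hKc]; omega
  · rintro ⟨J, b⟩ h
    simp only [Finset.mem_sigma, mem_filter, mem_powerset, Finset.mem_sdiff] at h
    obtain ⟨⟨hJA, hJc⟩, hbA, hbJ⟩ := h
    simp [Finset.erase_insert hbJ]
  · rintro ⟨K, b⟩ h
    simp only [Finset.mem_sigma, mem_filter, mem_powerset] at h
    simp [Finset.insert_erase h.2]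
  · rintro ⟨J, b⟩ h
    rfl

private lemma main_aux {ι R : Type*} [DecidableEq ι] [CommRing R] (A : Finset ι) (z : ι → R) (m : ℕ) :
    (∑ a ∈ A, z a) ^ (m + 1) =
      Iaux A z (m + 1) + ∑ J ∈ A.powerset.filter (fun J => J.Nonempty ∧ J.card ≤ m),
        ((Nat.factorial J.card : ℕ) : R) * (∑ a ∈ J, z a) * (∏ a ∈ J, z a) * (∑ a ∈ A, z a) ^ (m - J.card) := by
  classical
  induction m with
  | zero =>
    have h1 : Iaux A z 1 = ∑ a ∈ A, z a := by
      unfold Iaux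
      rw [← Finset.powersetCard_eq_filter, Finset.powersetCard_one, Finset.sum_map]
      simp
    have h2 : A.powerset.filter (fun J => J.Nonempty ∧ J.card ≤ 0) = ∅ := by
      refine Finset.filter_false_of_mem fun J _ => ?_
      rintro ⟨hne, hle⟩
      exact absurd (Finset.card_eq_zero.mp (Nat.le_zero.mp hle)) hne.ne_empty
    rw [h1, h2, Finset.sum_empty, add_zero, pow_one]
  | succ m ih =>
    have hZ : (∑ a ∈ A, z a) ^ (m + 1 + 1) = (∑ a ∈ A, z a) ^ (m + 1) * (∑ a ∈ A, z a) := by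
      rw [pow_succ]
    rw [hZ, ih, add_mul, Iaux_key]
    have hsplitset : A.powerset.filter (fun J => J.Nonempty ∧ J.card ≤ m + 1) =
        A.powerset.filter (fun J => J.card = m + 1) ∪
          A.powerset.filter (fun J => J.Nonempty ∧ J.card ≤ m) := by
      ext J
      simp only [Finset.mem_union, mem_filter, mem_powerset, ← Finset.card_pos]
      constructor
      · rintro ⟨hJA, hpos, hle⟩
        by_cases h : J.card = m + 1
        · exact Or.inl ⟨hJA, h⟩
        · exact Or.inr ⟨hJA, hpos, by omega⟩
      · rintro (⟨hJA, h⟩ | ⟨hJA, hpos, hle⟩)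
        · exact ⟨hJA, by omega, by omega⟩
        · exact ⟨hJA, hpos, by omega⟩
    have hdisj : Disjoint (A.powerset.filter (fun J => J.card = m + 1))
        (A.powerset.filter (fun J => J.Nonempty ∧ J.card ≤ m)) := by
      rw [Finset.disjoint_left]
      intro J h1 h2
      simp only [mem_filter] at h1 h2
      omega
    rw [hsplitset, Finset.sum_union hdisj]
    rw [add_assoc]
    congr 1
    congr 1
    · refine Finset.sum_congr rfl fun J hJ => ?_
      simp only [mem_filter] at hJ
      rw [hJ.2, Nat.sub_self, pow_zero, mul_one]
    · rw [Finset.sum_mul]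
      refine Finset.sum_congr rfl fun J hJ => ?_
      simp only [mem_filter] at hJ
      have : m + 1 - J.card = (m - J.card) + 1 := by omega
      rw [this, pow_succ]
      ring

/-- For a family `(z_a)_{a∈A}` in a commutative ring and `n ≥ |A|`,
`z_A^(n+1) = ∑_{∅≠J⊆A} |J|! · z_J · (∏_{ν∈J} z_ν) · z_A^(n-|J|)`,
where `z_S = ∑_{a∈S} z_a`. -/
theorem power_sum_subset_expansion {ι R : Type*} [DecidableEq ι] [CommRing R]
    (A : Finset ι) (z : ι → R) (n : ℕ) (hn : A.card ≤ n) :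
    (∑ a ∈ A, z a) ^ (n + 1) =
      ∑ J ∈ A.powerset.filter (fun J => J.Nonempty),
        ((Nat.factorial J.card : ℕ) : R) * (∑ a ∈ J, z a) * (∏ a ∈ J, z a) * (∑ a ∈ A, z a) ^ (n - J.card) := by
  classical
  rw [main_aux A z n]
  have hI : Iaux A z (n + 1) = 0 := by
    unfold Iaux
    have : A.powerset.filter (fun J => J.card = n + 1) = ∅ := by
      refine Finset.filter_false_of_mem fun J hJ => ?_
      have := Finset.card_le_card (Finset.mem_powerset.mp hJ)
      omega
    rw [this, Finset.sum_empty]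
  have hfilter : A.powerset.filter (fun J => J.Nonempty ∧ J.card ≤ n) =
      A.powerset.filter (fun J => J.Nonempty) := by
    refine Finset.filter_congr fun J hJ => ?_
    have := Finset.card_le_card (Finset.mem_powerset.mp hJ)
    exact ⟨fun h => h.1, fun h => ⟨h, by omega⟩⟩
  rw [hI, hfilter, zero_add]
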